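/- arXiv:1810.13309 — 2 statements merged into one kernel-verified Lean document; each statement's English description precedes it below -/
import Mathlib

section
/- For every p ∈ (0,1) and every v ∈ Int C, the second derivative of L_p at v in the direction w equals (−η(v,v))^{(p−4)/2} · ( −η(v,v)·η(w,w) + (2−p)·η(v,w)² ), and this quantity is strictly positive for every w ≠ 0. -/
/-- The Minkowski bilinear form on ℝ^{1+n}: η(v,w) = -v₀w₀ + Σᵢ vᵢwᵢ. -/
noncomputable def eta {n : ℕ} (v w : Fin (n + 1) → ℝ) : ℝ :=
  -(v 0 * w 0) + ∑ i : Fin n, v i.succ * w i.succ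

/-- The interior of the future causal cone: Int C = {v : η(v,v) < 0 and v₀ > 0}. -/
def FutureConeInt (n : ℕ) : Set (Fin (n + 1) → ℝ) :=
  {v | eta v v < 0 ∧ 0 < v 0}

/-- The Lagrangian L_p(v) = -(1/p)(-η(v,v))^{p/2}. -/
noncomputable def Lp {n : ℕ} (p : ℝ) (v : Fin (n + 1) → ℝ) : ℝ :=
  -(1 / p) * (-eta v v) ^ (p / 2)

variable {n : ℕ}

lemma eta_add_left (v v' w : Fin (n+1) → ℝ) : eta (v + v') w = eta v w + eta v' w := by
  simp only [eta, Pi.add_apply]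
  rw [Finset.sum_congr rfl (fun i _ => (add_mul (v i.succ) (v' i.succ) (w i.succ))),
    Finset.sum_add_distrib]
  ring

lemma eta_smul_left (c : ℝ) (v w : Fin (n+1) → ℝ) : eta (c • v) w = c * eta v w := by
  simp only [eta, Pi.smul_apply, smul_eq_mul]
  rw [Finset.sum_congr rfl (fun i _ => (mul_assoc c (v i.succ) (w i.succ))),
    ← Finset.mul_sum]
  ring

lemma eta_expand (c : ℝ) (v w : Fin (n+1) → ℝ) :
    eta (w - c • v) (w - c • v) = eta w w - 2*c*(eta v w) + c^2 * eta v v := by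
  simp only [eta, Pi.sub_apply, Pi.smul_apply, smul_eq_mul]
  rw [Finset.sum_congr rfl (fun i _ => show (w i.succ - c * v i.succ) * (w i.succ - c * v i.succ)
      = w i.succ * w i.succ - 2*c*(v i.succ * w i.succ) + c^2 * (v i.succ * v i.succ) by ring),
    Finset.sum_add_distrib, Finset.sum_sub_distrib, ← Finset.mul_sum, ← Finset.mul_sum]
  ring

lemma eta_sub_smul_right (c : ℝ) (v w : Fin (n+1) → ℝ) :
    eta v (w - c • v) = eta v w - c * eta v v := by
  simp only [eta, Pi.sub_apply, Pi.smul_apply, smul_eq_mul]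
  rw [Finset.sum_congr rfl (fun i _ => show v i.succ * (w i.succ - c * v i.succ)
      = v i.succ * w i.succ - c * (v i.succ * v i.succ) by ring),
    Finset.sum_sub_distrib, ← Finset.mul_sum]
  ring

lemma orth_spacelike (v u : Fin (n+1) → ℝ) (hv : eta v v < 0) (hv0 : 0 < v 0)
    (horth : eta v u = 0) (hu : u ≠ 0) : 0 < eta u u := by
  have hrw : ∀ x : Fin (n+1) → ℝ, ∀ y : Fin (n+1) → ℝ,
      eta x y = -(x 0 * y 0) + ∑ i : Fin n, x i.succ * y i.succ := fun _ _ => rfl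
  set Sv := ∑ i : Fin n, v i.succ ^ 2 with hSv
  set Su := ∑ i : Fin n, u i.succ ^ 2 with hSu
  set P := ∑ i : Fin n, v i.succ * u i.succ with hP
  have hv' : Sv < v 0 ^ 2 := by
    have := hrw v v
    rw [Finset.sum_congr rfl fun i _ => (pow_two (v i.succ)).symm, ← hSv] at this
    rw [this] at hv; nlinarith
  have hP' : P = v 0 * u 0 := by
    have := horth; rw [hrw] at this; linarith
  have hCS : P ^ 2 ≤ Sv * Su := Finset.sum_mul_sq_le_sq_mul_sq _ _ _
  have hSu0 : 0 ≤ Su := Finset.sum_nonneg fun i _ => sq_nonneg _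
  have hetauu : eta u u = -(u 0 ^ 2) + Su := by
    rw [hrw, Finset.sum_congr rfl fun i _ => (pow_two (u i.succ)).symm, ← hSu]; ring_nf
  rcases eq_or_lt_of_le hSu0 with h0 | hpos
  · exfalso
    have hz : ∀ i : Fin n, u i.succ = 0 := by
      intro i
      have := (Finset.sum_eq_zero_iff_of_nonneg (fun i _ => sq_nonneg (u i.succ))).mp h0.symm
        i (Finset.mem_univ i)
      exact (pow_eq_zero_iff two_ne_zero).mp this
    have hPz : P = 0 := Finset.sum_eq_zero fun i _ => by rw [hz i]; ring
    have hu0 : u 0 = 0 := by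
      have := hP'.symm.trans hPz
      rcases mul_eq_zero.mp this with h | h
      · exact absurd h (ne_of_gt hv0)
      · exact h
    apply hu
    funext i
    refine Fin.cases ?_ ?_ i
    · exact hu0
    · exact fun j => hz j
  · have hlt : P ^ 2 < v 0 ^ 2 * Su := lt_of_le_of_lt hCS (by nlinarith)
    rw [hP'] at hlt
    have : u 0 ^ 2 < Su := by nlinarith
    rw [hetauu]; linarith

lemma main_pos (p : ℝ) (hp1 : p < 1) (v w : Fin (n+1) → ℝ) (hv : eta v v < 0)
    (hv0 : 0 < v 0) (hw : w ≠ 0) :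
    0 < -(eta v v) * eta w w + (2 - p) * (eta v w)^2 := by
  by_cases ha : eta v w = 0
  · have := orth_spacelike v w hv hv0 ha hw
    rw [ha]; nlinarith
  · have hQ : eta v v ≠ 0 := ne_of_lt hv
    set Q := eta v v with hQdef
    set a := eta v w with hadef
    set s := eta w w with hsdef
    set u := w - (a / Q) • v with hu
    have horth : eta v u = 0 := by rw [hu, eta_sub_smul_right]; field_simp; simp only [hadef, hQdef]; ring
    have huu : eta u u = s - a^2/Q := by
      rw [hu, eta_expand]; field_simp; ring
    have hge : 0 ≤ eta u u := by
      by_cases h0 : u = 0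
      · rw [h0]; simp [eta]
      · exact (orth_spacelike v u hv hv0 horth h0).le
    have hge' : 0 ≤ s - a^2/Q := huu ▸ hge
    have h3 : (-Q) * (s - a^2/Q) = a^2 - Q*s := by field_simp; ring
    have h2 : 0 ≤ a^2 - Q*s := by
      have := mul_nonneg (neg_nonneg.mpr hv.le) hge'
      rw [h3] at this; exact this
    have ha2 : 0 < a^2 := by positivity
    nlinarith

noncomputable def prj (n : ℕ) (i : Fin (n+1)) : (Fin (n+1) → ℝ) →L[ℝ] ℝ :=
  ContinuousLinearMap.proj i

noncomputable def etaCLM (n : ℕ) (v : Fin (n+1) → ℝ) : (Fin (n+1) → ℝ) →L[ℝ] ℝ :=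
  (-(v 0)) • prj n 0 + ∑ i : Fin n, (v i.succ) • prj n i.succ

lemma etaCLM_apply (v w : Fin (n+1) → ℝ) : etaCLM n v w = eta v w := by
  simp [etaCLM, eta, prj, ContinuousLinearMap.sum_apply]

noncomputable def etaL (n : ℕ) :
    (Fin (n+1) → ℝ) →ₗ[ℝ] ((Fin (n+1) → ℝ) →L[ℝ] ℝ) where
  toFun := etaCLM n
  map_add' v v' := by ext w; simp [etaCLM_apply, eta_add_left]
  map_smul' c v := by ext w; simp [etaCLM_apply, eta_smul_left]

noncomputable def etaCLM2 (n : ℕ) :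
    (Fin (n+1) → ℝ) →L[ℝ] ((Fin (n+1) → ℝ) →L[ℝ] ℝ) :=
  LinearMap.toContinuousLinearMap (etaL n)

lemma etaCLM2_apply (v w : Fin (n+1) → ℝ) : etaCLM2 n v w = eta v w :=
  etaCLM_apply v w

lemma hasFDerivAt_negQ (v : Fin (n+1) → ℝ) :
    HasFDerivAt (fun u : Fin (n+1) → ℝ => -eta u u) ((-2 : ℝ) • etaCLM n v) v := by
  have h0 : HasFDerivAt (fun u : Fin (n+1) → ℝ => u 0 * u 0)
      (v 0 • prj n 0 + v 0 • prj n 0) v :=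
    ((prj n 0).hasFDerivAt (x := v)).mul ((prj n 0).hasFDerivAt (x := v))
  have hi : ∀ i : Fin n, HasFDerivAt (fun u : Fin (n+1) → ℝ => u i.succ * u i.succ)
      (v i.succ • prj n i.succ + v i.succ • prj n i.succ) v := fun i =>
    ((prj n i.succ).hasFDerivAt (x := v)).mul ((prj n i.succ).hasFDerivAt (x := v))
  have hsum := HasFDerivAt.fun_sum (fun i (_ : i ∈ Finset.univ) => hi i)
  have h := (h0.neg.add hsum).neg
  refine h.congr_fderiv ?_
  symm
  ext w
  simp only [ContinuousLinearMap.smul_apply, ContinuousLinearMap.neg_apply,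
    ContinuousLinearMap.add_apply, ContinuousLinearMap.sum_apply, etaCLM_apply,
    smul_eq_mul, prj, ContinuousLinearMap.proj_apply]
  rw [Finset.sum_congr rfl fun i _ => (two_mul (v i.succ * w i.succ)).symm,
    ← Finset.mul_sum]
  simp only [eta]
  ring

lemma hasFDerivAt_Lp (p : ℝ) (hp : 0 < p) (v : Fin (n+1) → ℝ) (hv : eta v v < 0) :
    HasFDerivAt (Lp p) (((-eta v v) ^ (p/2 - 1)) • etaCLM n v) v := by
  have ht : (0:ℝ) < -eta v v := by linarith
  have h1 := (hasFDerivAt_negQ v).rpow_const (p := p/2) (Or.inl (ne_of_gt ht))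
  have h2 := h1.const_mul (-(1/p))
  have heq : (((-eta v v) ^ (p/2 - 1)) • etaCLM n v)
      = (-(1/p)) • ((p/2 * (-eta v v)^(p/2-1)) • ((-2:ℝ) • etaCLM n v)) := by
    ext w
    simp only [ContinuousLinearMap.smul_apply, smul_eq_mul]
    field_simp
  rw [heq]
  exact h2

lemma hasFDerivAt_G (p : ℝ) (v : Fin (n+1) → ℝ) (hv : eta v v < 0) :
    HasFDerivAt (fun u : Fin (n+1) → ℝ => ((-eta u u) ^ (p/2 - 1)) • etaCLM n u)
      ((((-eta v v) ^ (p/2-1)) • etaCLM2 n)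
        + (((p/2-1) * (-eta v v)^(p/2-1-1)) • ((-2:ℝ) • etaCLM n v)).smulRight
            (etaCLM n v)) v := by
  have ht : (0:ℝ) < -eta v v := by linarith
  have ha := (hasFDerivAt_negQ v).rpow_const (p := p/2 - 1) (Or.inl (ne_of_gt ht))
  have hb : HasFDerivAt (fun u : Fin (n+1) → ℝ => etaCLM n u) (etaCLM2 n) v :=
    (etaCLM2 n).hasFDerivAt (x := v)
  exact ha.smul hb


theorem stmt_3 (n : ℕ) (p : ℝ) (hp : p ∈ Set.Ioo (0 : ℝ) 1)
    (v : Fin (n + 1) → ℝ) (hv : v ∈ FutureConeInt n) :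
    ∀ w : Fin (n + 1) → ℝ,
      iteratedFDeriv ℝ 2 (Lp p) v ![w, w]
        = (-eta v v) ^ ((p - 4) / 2) *
            (-(eta v v) * eta w w + (2 - p) * (eta v w) ^ 2) ∧
      (w ≠ 0 →
        0 < (-eta v v) ^ ((p - 4) / 2) *
              (-(eta v v) * eta w w + (2 - p) * (eta v w) ^ 2)) := by
  obtain ⟨hv1, hv2⟩ := hv
  intro w
  have ht : (0:ℝ) < -eta v v := by linarith
  constructor
  · have hp0 := hp.1
    have hU : IsOpen {u : Fin (n+1) → ℝ | eta u u < 0} := by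
      have hc : Continuous fun u : Fin (n+1) → ℝ => eta u u := by
        simp only [eta]
        fun_prop
      exact isOpen_lt hc continuous_const
    have hmem : {u : Fin (n+1) → ℝ | eta u u < 0} ∈ nhds v := hU.mem_nhds hv1
    have hfd : fderiv ℝ (Lp p) =ᶠ[nhds v]
        (fun u => ((-eta u u) ^ (p/2 - 1)) • etaCLM n u) :=
      Filter.eventually_of_mem hmem fun u hu => (hasFDerivAt_Lp p hp0 u hu).fderiv
    have h2 : fderiv ℝ (fderiv ℝ (Lp p)) v
        = ((((-eta v v) ^ (p/2-1)) • etaCLM2 n)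
          + (((p/2-1) * (-eta v v)^(p/2-1-1)) • ((-2:ℝ) • etaCLM n v)).smulRight
              (etaCLM n v)) := by
      rw [hfd.fderiv_eq]
      exact (hasFDerivAt_G p v hv1).fderiv
    rw [iteratedFDeriv_two_apply, h2]
    simp only [Matrix.cons_val_zero, Matrix.cons_val_one, Matrix.head_cons,
      ContinuousLinearMap.add_apply, ContinuousLinearMap.smul_apply,
      ContinuousLinearMap.smulRight_apply, etaCLM2_apply, etaCLM_apply, smul_eq_mul]
    rw [show p/2-1-1 = (p-4)/2 by ring, show p/2-1 = (p-4)/2 + 1 by ring,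
      Real.rpow_add ht, Real.rpow_one]
    ring
  · intro hw
    have hpos := main_pos p hp.2 v w hv1 hv2 hw
    exact mul_pos (Real.rpow_pos_of_pos ht ((p-4)/2)) hpos
end

section
/- Fix p ∈ (0,1) and x, y ∈ ℝ^{1+n} with y − x ∈ C. For every C¹ curve γ : [0,1] → ℝ^{1+n} with γ(0) = x, γ(1) = y and γ′(t) ∈ C for all t ∈ [0,1], one has ∫₀¹ L_p(γ′(t)) dt ≥ L_p(y − x), with equality for the straight segment γ(t) = x + t(y − x). Consequently, the infimum of the action ∫₀¹ L_p(γ′(t)) dt over all such curves equals L_p(y − x). -/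
/-- The future causal cone C = {v : η(v,v) ≤ 0 and v₀ ≥ 0}. -/
def FutureCone (n : ℕ) : Set (Fin (n + 1) → ℝ) :=
  {v | eta v v ≤ 0 ∧ 0 ≤ v 0}

noncomputable def tau {n : ℕ} (v : Fin (n + 1) → ℝ) : ℝ := Real.sqrt (-eta v v)

lemma tau_nonneg {n : ℕ} (v : Fin (n + 1) → ℝ) : 0 ≤ tau v := Real.sqrt_nonneg _

lemma eta_add_add {n : ℕ} (v w : Fin (n + 1) → ℝ) :
    eta (v + w) (v + w) = eta v v + 2 * eta v w + eta w w := by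
  simp only [eta, Pi.add_apply]
  rw [Finset.sum_congr rfl (fun i _ => (by ring :
    (v i.succ + w i.succ) * (v i.succ + w i.succ)
      = v i.succ * v i.succ + 2 * (v i.succ * w i.succ) + w i.succ * w i.succ))]
  rw [Finset.sum_add_distrib, Finset.sum_add_distrib, ← Finset.mul_sum]
  ring

lemma eta_smul_smul {n : ℕ} (a : ℝ) (v : Fin (n + 1) → ℝ) :
    eta (a • v) (a • v) = a ^ 2 * eta v v := by
  simp only [eta, Pi.smul_apply, smul_eq_mul]
  rw [Finset.sum_congr rfl (fun i _ => (by ring :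
    a * v i.succ * (a * v i.succ) = a ^ 2 * (v i.succ * v i.succ)))]
  rw [← Finset.mul_sum]
  ring

set_option maxHeartbeats 1000000 in
/-- Reverse Cauchy–Schwarz inequality on the causal cone. -/
lemma rev_cs {n : ℕ} {v w : Fin (n + 1) → ℝ} (hv : v ∈ FutureCone n) (hw : w ∈ FutureCone n) :
    tau v * tau w ≤ -eta v w := by
  obtain ⟨hv1, hv0⟩ := hv
  obtain ⟨hw1, hw0⟩ := hw
  set a := v 0 with hav
  set c := w 0 with hcv
  set S := ∑ i : Fin n, v i.succ * w i.succ with hS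
  set B := ∑ i : Fin n, v i.succ ^ 2 with hB
  set D := ∑ i : Fin n, w i.succ ^ 2 with hD
  have hBnn : 0 ≤ B := Finset.sum_nonneg fun i _ => sq_nonneg _
  have hDnn : 0 ≤ D := Finset.sum_nonneg fun i _ => sq_nonneg _
  set b := Real.sqrt B with hb
  set d := Real.sqrt D with hd
  have hb2 : b ^ 2 = B := Real.sq_sqrt hBnn
  have hd2 : d ^ 2 = D := Real.sq_sqrt hDnn
  have hbnn : 0 ≤ b := Real.sqrt_nonneg _
  have hdnn : 0 ≤ d := Real.sqrt_nonneg _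
  have hetav : eta v v = -(a * a) + B := by
    rw [hB]; simp only [eta, pow_two]; rfl
  have hetaw : eta w w = -(c * c) + D := by
    rw [hD]; simp only [eta, pow_two]; rfl
  -- Cauchy–Schwarz: S ≤ b * d
  have hcs : S ^ 2 ≤ B * D := by
    have := Finset.sum_mul_sq_le_sq_mul_sq Finset.univ (fun i : Fin n => v i.succ)
      (fun i : Fin n => w i.succ)
    simpa [hS, hB, hD] using this
  have hSbd : S ≤ b * d := by
    calc S ≤ |S| := le_abs_self _
      _ = Real.sqrt (S ^ 2) := (Real.sqrt_sq_eq_abs S).symm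
      _ ≤ Real.sqrt (B * D) := Real.sqrt_le_sqrt hcs
      _ = b * d := Real.sqrt_mul hBnn D
  clear_value S B D b d
  -- cone conditions: b ≤ a, d ≤ c
  have hvB : B ≤ a ^ 2 := by rw [hetav] at hv1; nlinarith
  have hwD : D ≤ c ^ 2 := by rw [hetaw] at hw1; nlinarith
  have hba : b ≤ a := by nlinarith [sq_nonneg (a - b), sq_nonneg (a + b)]
  have hdc : d ≤ c := by nlinarith [sq_nonneg (c - d), sq_nonneg (c + d)]
  have htv : tau v = Real.sqrt (a ^ 2 - b ^ 2) := by
    rw [tau, hetav, hb2]; congr 1; ring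
  have htw : tau w = Real.sqrt (c ^ 2 - d ^ 2) := by
    rw [tau, hetaw, hd2]; congr 1; ring
  have hetavw : -eta v w = a * c - S := by
    rw [hS]; simp only [eta]; ring
  rw [htv, htw, hetavw]
  have key : Real.sqrt (a ^ 2 - b ^ 2) * Real.sqrt (c ^ 2 - d ^ 2)
      = Real.sqrt ((a ^ 2 - b ^ 2) * (c ^ 2 - d ^ 2)) :=
    (Real.sqrt_mul (by linarith) _).symm
  rw [key]
  have hid : (a * c - b * d) ^ 2 = (a ^ 2 - b ^ 2) * (c ^ 2 - d ^ 2) + (a * d - b * c) ^ 2 := by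
    ring
  have h1 : (a ^ 2 - b ^ 2) * (c ^ 2 - d ^ 2) ≤ (a * c - b * d) ^ 2 := by
    have := sq_nonneg (a * d - b * c); linarith
  have h2 : 0 ≤ a * c - b * d := by
    have := mul_le_mul hba hdc hdnn (le_trans hbnn hba); linarith
  calc Real.sqrt ((a ^ 2 - b ^ 2) * (c ^ 2 - d ^ 2))
      ≤ Real.sqrt ((a * c - b * d) ^ 2) := Real.sqrt_le_sqrt h1
    _ = a * c - b * d := Real.sqrt_sq h2
    _ ≤ a * c - S := by linarith

lemma cone_add {n : ℕ} {v w : Fin (n + 1) → ℝ} (hv : v ∈ FutureCone n) (hw : w ∈ FutureCone n) :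
    v + w ∈ FutureCone n := by
  have hcs := rev_cs hv hw
  have h1 : tau v * tau w ≥ 0 := mul_nonneg (tau_nonneg v) (tau_nonneg w)
  refine ⟨?_, ?_⟩
  · rw [eta_add_add]
    have := hv.1; have := hw.1
    linarith
  · have := hv.2; have := hw.2
    simpa using add_nonneg hv.2 hw.2

lemma cone_smul {n : ℕ} {a : ℝ} (ha : 0 ≤ a) {v : Fin (n + 1) → ℝ} (hv : v ∈ FutureCone n) :
    a • v ∈ FutureCone n := by
  refine ⟨?_, ?_⟩
  · rw [eta_smul_smul]
    exact mul_nonpos_of_nonneg_of_nonpos (sq_nonneg a) hv.1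
  · simpa using mul_nonneg ha hv.2

lemma tau_smul {n : ℕ} {a : ℝ} (ha : 0 ≤ a) (v : Fin (n + 1) → ℝ) :
    tau (a • v) = a * tau v := by
  rw [tau, eta_smul_smul, tau, show -(a ^ 2 * eta v v) = a ^ 2 * (-eta v v) by ring,
    Real.sqrt_mul (sq_nonneg a), Real.sqrt_sq ha]

lemma tau_superadd {n : ℕ} {v w : Fin (n + 1) → ℝ} (hv : v ∈ FutureCone n)
    (hw : w ∈ FutureCone n) : tau v + tau w ≤ tau (v + w) := by
  have hcs := rev_cs hv hw
  have hv2 : tau v ^ 2 = -eta v v := Real.sq_sqrt (by linarith [hv.1])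
  have hw2 : tau w ^ 2 = -eta w w := Real.sq_sqrt (by linarith [hw.1])
  have hmem := cone_add hv hw
  have hnn : (0 : ℝ) ≤ -eta (v + w) (v + w) := by linarith [hmem.1]
  have htw : tau (v + w) = Real.sqrt (-eta (v + w) (v + w)) := rfl
  rw [htw, Real.le_sqrt (add_nonneg (tau_nonneg v) (tau_nonneg w)) hnn, eta_add_add]
  nlinarith

lemma convex_cone {n : ℕ} : Convex ℝ (FutureCone n) := by
  intro v hv w hw a b ha hb _
  exact cone_add (cone_smul ha hv) (cone_smul hb hw)

lemma closed_cone {n : ℕ} : IsClosed (FutureCone n) := by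
  have hc : Continuous fun v : Fin (n + 1) → ℝ => eta v v := by
    simp only [eta]; fun_prop
  exact IsClosed.inter (isClosed_le hc continuous_const)
    (isClosed_le continuous_const (continuous_apply 0))

lemma Lp_eq_tau {n : ℕ} {p : ℝ} (hp : 0 < p) {v : Fin (n + 1) → ℝ} (hv : v ∈ FutureCone n) :
    Lp p v = -((1 / p) * tau v ^ p) := by
  have h0 : (0 : ℝ) ≤ -eta v v := by linarith [hv.1]
  rw [Lp, tau, Real.sqrt_eq_rpow, ← Real.rpow_mul h0]
  ring_nf

lemma continuous_Lp {n : ℕ} {p : ℝ} (_hp : 0 < p) : Continuous (Lp (n := n) p) := by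
  have hc : Continuous fun v : Fin (n + 1) → ℝ => -eta v v := by
    simp only [eta]; fun_prop
  have hr : Continuous fun x : ℝ => x ^ (p / 2) := by
    rw [continuous_iff_continuousAt]
    intro x
    exact Real.continuousAt_rpow_const x (p / 2) (Or.inr (by positivity))
  exact (continuous_const.mul (hr.comp hc))

lemma convexOn_Lp {n : ℕ} {p : ℝ} (hp0 : 0 < p) (hp1 : p < 1) :
    ConvexOn ℝ (FutureCone n) (Lp p) := by
  refine ⟨convex_cone, fun v hv w hw a b ha hb hab => ?_⟩
  have hmem := convex_cone hv hw ha hb hab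
  rw [Lp_eq_tau hp0 hmem, Lp_eq_tau hp0 hv, Lp_eq_tau hp0 hw]
  have h1 : a * tau v + b * tau w ≤ tau (a • v + b • w) := by
    calc a * tau v + b * tau w = tau (a • v) + tau (b • w) := by
          rw [tau_smul ha, tau_smul hb]
      _ ≤ tau (a • v + b • w) := tau_superadd (cone_smul ha hv) (cone_smul hb hw)
  have h2 : (a * tau v + b * tau w) ^ p ≤ tau (a • v + b • w) ^ p :=
    Real.rpow_le_rpow (add_nonneg (mul_nonneg ha (tau_nonneg v)) (mul_nonneg hb (tau_nonneg w))) h1 hp0.le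
  have h3 : a * tau v ^ p + b * tau w ^ p ≤ (a * tau v + b * tau w) ^ p := by
    have := (Real.concaveOn_rpow hp0.le hp1.le).2 (Set.mem_Ici.2 (tau_nonneg v))
      (Set.mem_Ici.2 (tau_nonneg w)) ha hb hab
    simpa [smul_eq_mul] using this
  have hple : a * tau v ^ p + b * tau w ^ p ≤ tau (a • v + b • w) ^ p := le_trans h3 h2
  have hpinv : (0 : ℝ) < 1 / p := by positivity
  simp only [smul_eq_mul]
  nlinarith [mul_le_mul_of_nonneg_left hple hpinv.le]

/-- Every C¹ causal curve from x to y has action at least L_p(y-x), with the straight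
segment attaining this value; hence L_p(y-x) is the least element of the set of actions. -/
theorem stmt_5 (n : ℕ) (p : ℝ) (hp : p ∈ Set.Ioo (0 : ℝ) 1)
    (x y : Fin (n + 1) → ℝ) (hxy : y - x ∈ FutureCone n) :
    IsLeast {A : ℝ | ∃ γ γ' : ℝ → (Fin (n + 1) → ℝ),
        (∀ t ∈ Set.Icc (0 : ℝ) 1, HasDerivAt γ (γ' t) t) ∧
        ContinuousOn γ' (Set.Icc 0 1) ∧
        γ 0 = x ∧ γ 1 = y ∧
        (∀ t ∈ Set.Icc (0 : ℝ) 1, γ' t ∈ FutureCone n) ∧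
        A = ∫ t in (0 : ℝ)..1, Lp p (γ' t)}
      (Lp p (y - x)) := by
  obtain ⟨hp0, hp1⟩ := hp
  constructor
  · -- membership: the straight segment
    refine ⟨fun t => x + t • (y - x), fun _ => y - x, ?_, continuousOn_const, ?_, ?_, ?_, ?_⟩
    · intro t _
      have h := ((hasDerivAt_id t).smul_const (y - x)).const_add x
      simpa using h
    · simp
    · funext i; simp
    · intro t _; exact hxy
    · rw [intervalIntegral.integral_const]
      simp
  · -- lower bound
    rintro A ⟨γ, γ', hderiv, hγ'c, h0, h1, hcone, rfl⟩
    set μ := MeasureTheory.volume.restrict (Set.Ioc (0 : ℝ) 1) with hμ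
    haveI : MeasureTheory.IsProbabilityMeasure μ := by
      constructor
      rw [hμ, MeasureTheory.Measure.restrict_apply_univ]
      simp [Real.volume_Ioc]
    have hIcc : Set.Ioc (0 : ℝ) 1 ⊆ Set.Icc 0 1 := Set.Ioc_subset_Icc_self
    -- integrability of γ'
    have hfi : MeasureTheory.Integrable γ' μ := by
      exact ((hγ'c.integrableOn_compact (μ := MeasureTheory.volume) isCompact_Icc).mono_set hIcc)
    -- integrability of Lp ∘ γ'
    have hLpc : Continuous (Lp (n := n) p) := continuous_Lp hp0
    have hgi : MeasureTheory.Integrable (Lp p ∘ γ') μ := by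
      have : ContinuousOn (Lp p ∘ γ') (Set.Icc 0 1) := hLpc.comp_continuousOn hγ'c
      exact ((this.integrableOn_compact (μ := MeasureTheory.volume) isCompact_Icc).mono_set hIcc)
    -- a.e. membership in the cone
    have hfs : ∀ᵐ t ∂μ, γ' t ∈ FutureCone n :=
      MeasureTheory.ae_restrict_of_forall_mem measurableSet_Ioc fun t ht => hcone t (hIcc ht)
    -- FTC: the integral of γ' is y - x
    have hftc : ∫ t, γ' t ∂μ = y - x := by
      have hint : IntervalIntegrable γ' MeasureTheory.volume 0 1 :=
        ContinuousOn.intervalIntegrable (by rwa [Set.uIcc_of_le zero_le_one])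
      have := intervalIntegral.integral_eq_sub_of_hasDerivAt
        (f := γ) (f' := γ') (a := (0:ℝ)) (b := 1)
        (by rw [Set.uIcc_of_le zero_le_one]; exact hderiv) hint
      rw [intervalIntegral.integral_of_le zero_le_one] at this
      rw [hμ, this, h0, h1]
    -- Jensen
    have hjen := (convexOn_Lp (n := n) hp0 hp1).map_integral_le
      (hLpc.continuousOn) closed_cone hfs hfi hgi
    rw [hftc] at hjen
    calc Lp p (y - x) ≤ ∫ t, Lp p (γ' t) ∂μ := hjen
      _ = ∫ t in (0:ℝ)..1, Lp p (γ' t) := (intervalIntegral.integral_of_le zero_le_one).symm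
end
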